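/- arXiv:1801.00400 — 3 statements merged into one kernel-verified Lean document; each statement's English description precedes it below -/
import Mathlib

section
/- Assume the standing hypotheses (H1)–(H7). Then for every (t,ξ) ∈ ℝ₊ × E, sup_{x ∈ 𝒜_(t,ξ)} |V(T, x(T))| → 0 as T → ∞. -/
open Filter Topology MeasureTheory Set

variable {E : Type*} [NormedAddCommGroup E] [NormedSpace ℝ E]

/-- An arc: an element of `W^{1,1}_loc(ℝ₊,E)`, recorded together with its
a.e. strong derivative. -/
structure Arc (E : Type*) [NormedAddCommGroup E] [NormedSpace ℝ E] where
  x : ℝ → E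
  dx : ℝ → E
  locInt : ∀ T : ℝ, IntegrableOn dx (Icc 0 T) volume
  deriv_ae : ∀ᵐ t ∂(volume.restrict (Ioi (0:ℝ))), HasDerivAt x (dx t) t
  fund : ∀ t : ℝ, 0 ≤ t → x t = x 0 + ∫ s in (0:ℝ)..t, dx s

/-- The admissible trajectories `𝒜_(t,ξ)`. -/
def Admissible (Γ : ℝ → E → Set E) (t : ℝ) (ξ : E) (a : Arc E) : Prop :=
  a.x t = ξ ∧ ∀ᵐ s ∂(volume.restrict (Ici t)), a.dx s ∈ Γ s (a.x s)

/-- The value function `V(t,ξ) = inf_{x ∈ 𝒜_(t,ξ)} ∫_t^∞ L(s,x(s),ẋ(s))ds`,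
the infimum being taken over admissible trajectories whose improper integral
`lim_{T→∞} ∫_t^T` exists. -/
noncomputable def valueFun (L : ℝ → E → E → ℝ) (Γ : ℝ → E → Set E) (t : ℝ) (ξ : E) : ℝ :=
  sInf {r : ℝ | ∃ a : Arc E, Admissible Γ t ξ a ∧
    Tendsto (fun T : ℝ => ∫ s in t..T, L s (a.x s) (a.dx s)) atTop (𝓝 r)}

/-- `a` is an optimal trajectory for the problem starting at time `0` from `ξ0`:
it is admissible and `∫_0^∞ L(s,a(s),ȧ(s))ds = V(0,ξ0)` (a finite real number). -/
def OptimalFrom (L : ℝ → E → E → ℝ) (Γ : ℝ → E → Set E) (ξ0 : E) (a : Arc E) : Prop :=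
  Admissible Γ 0 ξ0 a ∧
  Tendsto (fun T : ℝ => ∫ s in (0:ℝ)..T, L s (a.x s) (a.dx s)) atTop
    (𝓝 (valueFun L Γ 0 ξ0))

/-- (H1) admissible trajectories exist from every initial condition. -/
def Hyp1 (Γ : ℝ → E → Set E) : Prop :=
  ∀ t : ℝ, 0 ≤ t → ∀ ξ : E, ∃ a : Arc E, Admissible Γ t ξ a

/-- (H2) `L(·,x,y)` is measurable. -/
def Hyp2 (L : ℝ → E → E → ℝ) : Prop :=
  ∀ x y : E, Measurable (fun t : ℝ => L t x y)

/-- (H3) Lipschitz and integrability conditions on `L` with moduli `l0, l1, l2`. -/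
def Hyp3 (L : ℝ → E → E → ℝ) (l0 l1 l2 : ℝ → ℝ) : Prop :=
  (∀ t : ℝ, 0 ≤ l0 t ∧ 0 ≤ l1 t ∧ 0 ≤ l2 t) ∧
  IntegrableOn l0 (Ici 0) volume ∧ IntegrableOn l1 (Ici 0) volume ∧
  IntegrableOn l2 (Ici 0) volume ∧
  (∀ T : ℝ, ∃ M : ℝ, ∀ t ∈ Icc (0:ℝ) T, l2 t ≤ M) ∧
  ∀ᵐ t ∂(volume.restrict (Ici (0:ℝ))),
    |L t 0 0| ≤ l0 t ∧
    ∀ x y x' y' : E, |L t x y - L t x' y'| ≤ l1 t * ‖x - x'‖ + l2 t * ‖y - y'‖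

/-- (H4) `Γ` has nonempty closed values. -/
def Hyp4 (Γ : ℝ → E → Set E) : Prop :=
  ∀ t : ℝ, 0 ≤ t → ∀ x : E, (Γ t x).Nonempty ∧ IsClosed (Γ t x)

/-- (H5) `Γ(·,x)` is measurable. -/
def Hyp5 (Γ : ℝ → E → Set E) : Prop :=
  ∀ x : E, ∀ U : Set E, IsOpen U → MeasurableSet {t : ℝ | 0 ≤ t ∧ (Γ t x ∩ U).Nonempty}

/-- (H5') `Γ(·,x)` is lower semicontinuous. -/
def Hyp5' (Γ : ℝ → E → Set E) : Prop :=
  ∀ x : E, ∀ U : Set E, IsOpen U → ∀ t : ℝ, 0 ≤ t → (Γ t x ∩ U).Nonempty →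
    ∃ ε > (0:ℝ), ∀ s : ℝ, 0 ≤ s → |s - t| < ε → (Γ s x ∩ U).Nonempty

/-- (H6) boundedness and Lipschitz continuity of `Γ` with moduli `γ0, γ1`. -/
def Hyp6 (Γ : ℝ → E → Set E) (γ0 γ1 : ℝ → ℝ) : Prop :=
  (∀ t : ℝ, 0 ≤ γ0 t ∧ 0 ≤ γ1 t) ∧
  (∀ T : ℝ, IntegrableOn γ0 (Icc 0 T) volume) ∧
  (∀ T : ℝ, IntegrableOn γ1 (Icc 0 T) volume) ∧
  (∀ t : ℝ, 0 ≤ t → ∀ y ∈ Γ t 0, ‖y‖ ≤ γ0 t) ∧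
  (∀ t : ℝ, 0 ≤ t → ∀ x x' : E, ∀ y ∈ Γ t x, ∃ y' ∈ Γ t x', ‖y - y'‖ ≤ γ1 t * ‖x - x'‖)

/-- (H7) integrability conditions on the Lipschitz moduli. -/
def Hyp7 (l1 l2 γ0 γ1 : ℝ → ℝ) : Prop :=
  IntegrableOn (fun s : ℝ => Real.exp (∫ τ in (0:ℝ)..s, γ1 τ) *
    (1 + ∫ τ in (0:ℝ)..s, γ0 τ) * (l1 s + l2 s * γ1 s)) (Ici 0) volume ∧
  IntegrableOn (fun s : ℝ => l2 s * γ0 s) (Ici 0) volume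

private lemma intInt_of_locInt {F : Type*} [NormedAddCommGroup F] {g : ℝ → F}
    (hg : ∀ T : ℝ, IntegrableOn g (Icc 0 T) volume)
    {p q : ℝ} (hp : 0 ≤ p) (hpq : p ≤ q) : IntervalIntegrable g volume p q := by
  have : IntegrableOn g (uIcc p q) volume := by
    rw [uIcc_of_le hpq]
    exact (hg q).mono_set (Icc_subset_Icc hp le_rfl)
  exact this.intervalIntegrable

private lemma gronwall_core {a s : ℝ} (has : a ≤ s) (g0 g1 u : ℝ → ℝ)
    (hg0 : ∀ τ, 0 ≤ g0 τ) (hg1 : ∀ τ, 0 ≤ g1 τ)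
    (hg0i : ∀ p q : ℝ, a ≤ p → p ≤ q → IntervalIntegrable g0 volume p q)
    (hg1i : ∀ p q : ℝ, a ≤ p → p ≤ q → IntervalIntegrable g1 volume p q)
    (hstep : ∀ p q : ℝ, a ≤ p → p ≤ q →
      u q ≤ u p + (∫ τ in p..q, g0 τ) + (∫ τ in p..q, g1 τ) * u q) :
    u s ≤ (u a + ∫ τ in a..s, g0 τ) * Real.exp (∫ τ in a..s, g1 τ) := by
  set G : ℝ → ℝ := fun τ => ∫ r in a..τ, g1 r with hG
  have hGdiff : ∀ p q : ℝ, a ≤ p → p ≤ q → (∫ τ in p..q, g1 τ) = G q - G p := by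
    intro p q hp hpq
    have h := intervalIntegral.integral_add_adjacent_intervals
      (hg1i a p le_rfl hp) (hg1i p q (le_trans le_rfl hp) hpq)
    simp only [hG]; linarith
  have hGmono : ∀ p q : ℝ, a ≤ p → p ≤ q → G p ≤ G q := by
    intro p q hp hpq
    have h2 : 0 ≤ ∫ τ in p..q, g1 τ :=
      intervalIntegral.integral_nonneg hpq (fun τ _ => hg1 τ)
    have := hGdiff p q hp hpq
    linarith
  have hg0nn : ∀ p q : ℝ, p ≤ q → 0 ≤ ∫ τ in p..q, g0 τ := fun p q hpq =>
    intervalIntegral.integral_nonneg hpq (fun τ _ => hg0 τ)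
  have hg0add : ∀ p q : ℝ, a ≤ p → p ≤ q →
      (∫ τ in a..p, g0 τ) + (∫ τ in p..q, g0 τ) = ∫ τ in a..q, g0 τ := by
    intro p q hp hpq
    exact intervalIntegral.integral_add_adjacent_intervals
      (hg0i a p le_rfl hp) (hg0i p q hp hpq)
  set Θ : ℝ := G s with hΘ
  have hGa : G a = 0 := intervalIntegral.integral_same
  have hΘ0 : 0 ≤ Θ := by rw [hΘ, ← hGa]; exact hGmono a s le_rfl has
  rcases eq_or_lt_of_le hΘ0 with hΘz | hΘpos
  · -- Θ = 0
    have h := hstep a s le_rfl has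
    have hG1 : (∫ τ in a..s, g1 τ) = 0 := by
      rw [hGdiff a s le_rfl has, hGa, ← hΘ, ← hΘz]; ring
    rw [hG1] at h
    rw [hG1, Real.exp_zero, mul_one]
    linarith
  · -- Θ > 0
    have hGcont : ContinuousOn G (Icc a s) := by
      have hint : IntegrableOn g1 (uIcc a s) volume := by
        rw [uIcc_of_le has, integrableOn_Icc_iff_integrableOn_Ioc]
        exact (hg1i a s le_rfl has).1
      have := intervalIntegral.continuousOn_primitive_interval (f := g1) (μ := volume) hint
      rwa [uIcc_of_le has] at this
    -- main claim for large n
    have claim : ∀ n : ℕ, 0 < n → Θ / n < 1 →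
        u s ≤ (u a + ∫ τ in a..s, g0 τ) * ((1 - Θ / n)⁻¹) ^ n := by
      intro n hn hδ1
      set δ : ℝ := Θ / n with hδdef
      have hδpos : 0 < δ := div_pos hΘpos (by exact_mod_cast hn)
      have h1δ : 0 < 1 - δ := by linarith
      set B : ℝ := (1 - δ)⁻¹ with hBdef
      have hBpos : 0 < B := inv_pos.2 h1δ
      have hBmul : (1 - δ) * B = 1 := mul_inv_cancel₀ h1δ.ne'
      have hB1 : 1 ≤ B := by nlinarith
      have hIVT : ∀ i : ℕ, i ≤ n → ∃ c, (c ∈ Icc a s) ∧ G c = i * δ := by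
        intro i hi
        have hmem : (i : ℝ) * δ ∈ Icc (G a) (G s) := by
          constructor
          · rw [hGa]; positivity
          · rw [← hΘ]
            have : (i : ℝ) ≤ n := by exact_mod_cast hi
            have := mul_le_mul_of_nonneg_right this hδpos.le
            rw [hδdef] at this ⊢
            calc (i:ℝ) * (Θ/n) ≤ n * (Θ/n) := this
              _ = Θ := by field_simp
        obtain ⟨c, hc, hGc⟩ := intermediate_value_Icc has hGcont hmem
        exact ⟨c, hc, hGc⟩
      choose! f hf1 hf2 using hIVT
      have hford : ∀ i : ℕ, i + 1 ≤ n → f i ≤ f (i + 1) := by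
        intro i hi
        by_contra hcon
        push_neg at hcon
        have h1 := hGmono (f (i+1)) (f i) (hf1 (i+1) hi).1 hcon.le
        rw [hf2 i (by omega), hf2 (i+1) hi] at h1
        push_cast at h1
        nlinarith
      have key : ∀ i : ℕ, i ≤ n →
          u (f i) ≤ (u a + ∫ τ in a..(f i), g0 τ) * B ^ i := by
        intro i
        induction i with
        | zero =>
          intro h0n
          have haf : a ≤ f 0 := (hf1 0 h0n).1
          have h := hstep a (f 0) le_rfl haf
          have hz : (∫ τ in a..(f 0), g1 τ) = 0 := by
            rw [hGdiff a (f 0) le_rfl haf, hGa, hf2 0 h0n]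
            push_cast; ring
          rw [hz] at h
          simpa using (by linarith : u (f 0) ≤ u a + ∫ τ in a..(f 0), g0 τ)
        | succ i ih =>
          intro hin
          have hi : i ≤ n := by omega
          have ihi := ih hi
          have hap : a ≤ f i := (hf1 i hi).1
          have hpq : f i ≤ f (i+1) := hford i hin
          have haq : a ≤ f (i+1) := le_trans hap hpq
          have hθ : (∫ τ in (f i)..(f (i+1)), g1 τ) = δ := by
            rw [hGdiff (f i) (f (i+1)) hap hpq, hf2 i hi, hf2 (i+1) hin]
            push_cast; ring
          have h := hstep (f i) (f (i+1)) hap hpq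
          rw [hθ] at h
          have h5 : u (f (i+1)) ≤ (u (f i) + ∫ τ in (f i)..(f (i+1)), g0 τ) * B := by
            rw [hBdef, ← div_eq_mul_inv, le_div_iff₀ h1δ]
            have hexp : u (f (i+1)) * (1 - δ) = u (f (i+1)) - δ * u (f (i+1)) := by ring
            linarith
          have hI0pq : 0 ≤ ∫ τ in (f i)..(f (i+1)), g0 τ := hg0nn _ _ hpq
          have hBi : 1 ≤ B ^ i := one_le_pow₀ hB1
          have hadd := hg0add (f i) (f (i+1)) hap hpq
          calc u (f (i+1)) ≤ (u (f i) + ∫ τ in (f i)..(f (i+1)), g0 τ) * B := h5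
            _ ≤ ((u a + ∫ τ in a..(f i), g0 τ) * B ^ i
                + (∫ τ in (f i)..(f (i+1)), g0 τ) * B ^ i) * B := by
                have h9 : u (f i) + (∫ τ in (f i)..(f (i+1)), g0 τ) ≤
                    (u a + ∫ τ in a..(f i), g0 τ) * B ^ i
                    + (∫ τ in (f i)..(f (i+1)), g0 τ) * B ^ i := by nlinarith
                exact mul_le_mul_of_nonneg_right h9 hBpos.le
            _ = ((u a + ((∫ τ in a..(f i), g0 τ) + ∫ τ in (f i)..(f (i+1)), g0 τ))) * B ^ (i+1) := by
                ring
            _ = (u a + ∫ τ in a..(f (i+1)), g0 τ) * B ^ (i+1) := by rw [hadd]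
      -- last segment from f n to s
      have hfn := key n le_rfl
      have hafn : a ≤ f n := (hf1 n le_rfl).1
      have hfns : f n ≤ s := (hf1 n le_rfl).2
      have hz : (∫ τ in (f n)..s, g1 τ) = 0 := by
        rw [hGdiff (f n) s hafn hfns, hf2 n le_rfl, ← hΘ, hδdef]
        field_simp
        ring
      have h := hstep (f n) s hafn hfns
      rw [hz] at h
      have hI0 : 0 ≤ ∫ τ in (f n)..s, g0 τ := hg0nn _ _ hfns
      have hBn : 1 ≤ B ^ n := one_le_pow₀ hB1
      have hadd := hg0add (f n) s hafn hfns
      calc u s ≤ u (f n) + ∫ τ in (f n)..s, g0 τ := by linarith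
        _ ≤ (u a + ∫ τ in a..(f n), g0 τ) * B ^ n + (∫ τ in (f n)..s, g0 τ) * B ^ n := by
            nlinarith [hfn, hI0, hBn]
        _ = (u a + ((∫ τ in a..(f n), g0 τ) + ∫ τ in (f n)..s, g0 τ)) * B ^ n := by ring
        _ = (u a + ∫ τ in a..s, g0 τ) * B ^ n := by rw [hadd]
    -- pass to the limit
    have hexp : (∫ τ in a..s, g1 τ) = Θ := by rw [hΘ]
    rw [hexp]
    have hlim : Tendsto (fun n : ℕ => (u a + ∫ τ in a..s, g0 τ) * ((1 - Θ / n)⁻¹) ^ n)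
        atTop (𝓝 ((u a + ∫ τ in a..s, g0 τ) * Real.exp Θ)) := by
      have h1 : Tendsto (fun n : ℕ => ((1 + (-Θ) / n) ^ n)) atTop (𝓝 (Real.exp (-Θ))) :=
        Real.tendsto_one_add_div_pow_exp (-Θ)
      have h2 : Tendsto (fun n : ℕ => ((1 + (-Θ) / n) ^ n)⁻¹) atTop (𝓝 (Real.exp (-Θ))⁻¹) :=
        h1.inv₀ (by positivity)
      have h3 : (Real.exp (-Θ))⁻¹ = Real.exp Θ := by
        rw [Real.exp_neg, inv_inv]
      rw [h3] at h2
      refine (h2.const_mul (u a + ∫ τ in a..s, g0 τ)).congr fun n => ?_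
      rw [inv_pow, neg_div, ← sub_eq_add_neg]
    apply ge_of_tendsto hlim
    have hev : ∀ᶠ n : ℕ in atTop, Θ / (n : ℝ) < 1 := by
      have := tendsto_const_div_atTop_nhds_zero_nat Θ
      exact this.eventually_lt_const one_pos
    filter_upwards [hev, eventually_gt_atTop 0] with n h1 h2
    exact claim n h2 h1



lemma Arc.diff_eq [CompleteSpace E] (c : Arc E) {p q : ℝ} (hp : 0 ≤ p) (hpq : p ≤ q) :
    c.x q = c.x p + ∫ τ in p..q, c.dx τ := by
  have h1 := c.fund p hp
  have h2 := c.fund q (le_trans hp hpq)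
  have h3 := intervalIntegral.integral_add_adjacent_intervals
    (intInt_of_locInt c.locInt le_rfl hp) (intInt_of_locInt c.locInt hp hpq)
  rw [h2, h1, ← h3]
  abel

lemma Arc.norm_diff_le [CompleteSpace E] (c : Arc E) {p q : ℝ} (hp : 0 ≤ p) (hpq : p ≤ q) :
    ‖c.x q‖ ≤ ‖c.x p‖ + ∫ τ in p..q, ‖c.dx τ‖ := by
  rw [c.diff_eq hp hpq]
  refine le_trans (norm_add_le _ _) ?_
  gcongr
  exact intervalIntegral.norm_integral_le_integral_norm hpq

lemma Hyp6.norm_mem_le {Γ : ℝ → E → Set E} {γ0 γ1 : ℝ → ℝ} (h6 : Hyp6 Γ γ0 γ1)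
    {τ : ℝ} (hτ : 0 ≤ τ) {x y : E} (hy : y ∈ Γ τ x) : ‖y‖ ≤ γ0 τ + γ1 τ * ‖x‖ := by
  obtain ⟨y', hy', hle⟩ := h6.2.2.2.2 τ hτ x 0 y hy
  have h0 : ‖y'‖ ≤ γ0 τ := h6.2.2.2.1 τ hτ y' hy'
  rw [sub_zero] at hle
  calc ‖y‖ = ‖(y - y') + y'‖ := by rw [sub_add_cancel]
    _ ≤ ‖y - y'‖ + ‖y'‖ := norm_add_le _ _
    _ ≤ γ0 τ + γ1 τ * ‖x‖ := by linarith

lemma arc_gronwall [CompleteSpace E] {Γ : ℝ → E → Set E} {γ0 γ1 : ℝ → ℝ}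
    (h6 : Hyp6 Γ γ0 γ1) (c : Arc E) (a : ℝ) (ha : 0 ≤ a)
    (hadm : ∀ᵐ τ ∂(volume.restrict (Ici a)), c.dx τ ∈ Γ τ (c.x τ)) :
    ∀ s : ℝ, a ≤ s →
      ‖c.x s‖ ≤ (‖c.x a‖ + ∫ τ in a..s, γ0 τ) * Real.exp (∫ τ in a..s, γ1 τ) := by
  intro s has
  obtain ⟨hγnn, hγ0i, hγ1i, hγbd, hγlip⟩ := h6
  set u : ℝ → ℝ := fun r => ‖c.x a‖ + ∫ τ in a..r, ‖c.dx τ‖ with hu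
  have hdxi : ∀ p q : ℝ, a ≤ p → p ≤ q → IntervalIntegrable (fun τ => ‖c.dx τ‖) volume p q :=
    fun p q hp hpq => (intInt_of_locInt c.locInt (le_trans ha hp) hpq).norm
  have hxu : ∀ r : ℝ, a ≤ r → ‖c.x r‖ ≤ u r := fun r hr => c.norm_diff_le ha hr
  have humono : ∀ p q : ℝ, a ≤ p → p ≤ q → u p ≤ u q := by
    intro p q hp hpq
    have h3 := intervalIntegral.integral_add_adjacent_intervals
      (hdxi a p le_rfl hp) (hdxi p q hp hpq)
    have h4 : 0 ≤ ∫ τ in p..q, ‖c.dx τ‖ :=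
      intervalIntegral.integral_nonneg hpq (fun τ _ => norm_nonneg _)
    simp only [hu]
    linarith
  have hbd : ∀ᵐ τ ∂(volume.restrict (Ici a)), ‖c.dx τ‖ ≤ γ0 τ + γ1 τ * ‖c.x τ‖ := by
    filter_upwards [hadm, ae_restrict_mem measurableSet_Ici] with τ hmem hτa
    exact Hyp6.norm_mem_le ⟨hγnn, hγ0i, hγ1i, hγbd, hγlip⟩ (le_trans ha hτa) hmem
  have hstep : ∀ p q : ℝ, a ≤ p → p ≤ q →
      u q ≤ u p + (∫ τ in p..q, γ0 τ) + (∫ τ in p..q, γ1 τ) * u q := by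
    intro p q hp hpq
    have h3 := intervalIntegral.integral_add_adjacent_intervals
      (hdxi a p le_rfl hp) (hdxi p q hp hpq)
    have hbd' : ∀ᵐ τ ∂(volume.restrict (Icc p q)), ‖c.dx τ‖ ≤ γ0 τ + γ1 τ * u q := by
      have hsub : Icc p q ⊆ Ici a := fun τ hτ => le_trans hp hτ.1
      filter_upwards [ae_restrict_of_ae_restrict_of_subset hsub hbd,
        ae_restrict_mem measurableSet_Icc] with τ h1 h2
      have h5 : ‖c.x τ‖ ≤ u q := le_trans (hxu τ (le_trans hp h2.1)) (humono τ q (le_trans hp h2.1) h2.2)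
      nlinarith [(hγnn τ).2]
    have hmajint : IntervalIntegrable (fun τ => γ0 τ + γ1 τ * u q) volume p q := by
      refine (intInt_of_locInt hγ0i (le_trans ha hp) hpq).add ?_
      exact (intInt_of_locInt hγ1i (le_trans ha hp) hpq).mul_const _
    have hmono := intervalIntegral.integral_mono_ae_restrict hpq (hdxi p q hp hpq) hmajint hbd'
    have hsplit : (∫ τ in p..q, (γ0 τ + γ1 τ * u q)) =
        (∫ τ in p..q, γ0 τ) + (∫ τ in p..q, γ1 τ) * u q := by
      rw [intervalIntegral.integral_add (intInt_of_locInt hγ0i (le_trans ha hp) hpq)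
        ((intInt_of_locInt hγ1i (le_trans ha hp) hpq).mul_const _),
        intervalIntegral.integral_mul_const]
    have h8 : u q = u p + ∫ τ in p..q, ‖c.dx τ‖ := by simp only [hu]; linarith
    linarith [hmono, hsplit, h8]
  have hcore := gronwall_core has γ0 γ1 u (fun τ => (hγnn τ).1) (fun τ => (hγnn τ).2)
    (fun p q hp hpq => intInt_of_locInt hγ0i (le_trans ha hp) hpq)
    (fun p q hp hpq => intInt_of_locInt hγ1i (le_trans ha hp) hpq) hstep
  have hua : u a = ‖c.x a‖ := by simp [hu]
  rw [hua] at hcore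
  exact le_trans (hxu s has) hcore

private lemma combine_bound (n1 P Q P0 P' Q' P0' : ℝ) (hn1 : 0 ≤ n1) (hP : 0 ≤ P) (hQ : 0 ≤ Q)
    (hP0 : 0 ≤ P0) (hP' : 0 ≤ P') (hQ' : 0 ≤ Q') (hP0' : 0 ≤ P0') :
    ((n1 + P) * Real.exp P' + Q) * Real.exp Q' ≤
      (n1 + 1) * ((1 + (P0 + (P + Q))) * Real.exp (P0' + (P' + Q'))) := by
  have e1 : Real.exp (P0' + (P' + Q')) = Real.exp P0' * (Real.exp P' * Real.exp Q') := by
    rw [Real.exp_add, Real.exp_add]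
  have h1 : (1:ℝ) ≤ Real.exp P' := Real.one_le_exp hP'
  have h0 : (1:ℝ) ≤ Real.exp P0' := Real.one_le_exp hP0'
  have hq : (0:ℝ) < Real.exp Q' := Real.exp_pos _
  have hp : (0:ℝ) < Real.exp P' := Real.exp_pos _
  calc ((n1 + P) * Real.exp P' + Q) * Real.exp Q'
      ≤ ((n1 + P + Q) * Real.exp P') * Real.exp Q' := by
        have k1 : (n1 + P) * Real.exp P' + Q ≤ (n1 + P + Q) * Real.exp P' := by
          nlinarith [mul_nonneg hQ (by linarith : (0:ℝ) ≤ Real.exp P' - 1)]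
        exact mul_le_mul_of_nonneg_right k1 hq.le
    _ = (n1 + P + Q) * (Real.exp P' * Real.exp Q') := by ring
    _ ≤ ((n1 + 1) * (1 + (P0 + (P + Q)))) * (Real.exp P0' * (Real.exp P' * Real.exp Q')) := by
        apply mul_le_mul ?_ ?_ (by positivity) (by positivity)
        · nlinarith [mul_nonneg hn1 (add_nonneg hP0 (add_nonneg hP hQ))]
        · exact le_mul_of_one_le_left (mul_nonneg hp.le hq.le) h0
    _ = (n1 + 1) * ((1 + (P0 + (P + Q))) * Real.exp (P0' + (P' + Q'))) := by rw [e1]; ring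


/-- Under (H1)–(H7), for every `(t,ξ)`, `sup_{x ∈ 𝒜_(t,ξ)} |V(T,x(T))| → 0` as
`T → ∞`. -/
theorem valueFun_tendsto_zero_along_admissible
    [CompleteSpace E] [TopologicalSpace.SeparableSpace E]
    (L : ℝ → E → E → ℝ) (Γ : ℝ → E → Set E) (l0 l1 l2 γ0 γ1 : ℝ → ℝ)
    (h1 : Hyp1 Γ) (h2 : Hyp2 L) (h3 : Hyp3 L l0 l1 l2) (h4 : Hyp4 Γ)
    (h5 : Hyp5 Γ) (h6 : Hyp6 Γ γ0 γ1) (h7 : Hyp7 l1 l2 γ0 γ1) :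
    ∀ t : ℝ, 0 ≤ t → ∀ ξ : E, ∀ ε : ℝ, 0 < ε → ∃ T₀ : ℝ, ∀ T : ℝ, T₀ ≤ T →
      ∀ a : Arc E, Admissible Γ t ξ a → |valueFun L Γ T (a.x T)| ≤ ε := by
  obtain ⟨h3nn, hl0i, hl1i, hl2i, hl2b, h3ae⟩ := h3
  obtain ⟨hγnn, hγ0i, hγ1i, hγbd, hγlip⟩ := h6
  obtain ⟨h7a, h7b⟩ := h7
  intro t ht ξ ε hε
  set C : ℝ := ‖ξ‖ + 1 with hC
  have hCpos : 0 < C := by positivity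
  set M : ℝ → ℝ := fun τ => l0 τ +
    C * (Real.exp (∫ r in (0:ℝ)..τ, γ1 r) * (1 + ∫ r in (0:ℝ)..τ, γ0 r) * (l1 τ + l2 τ * γ1 τ))
    + l2 τ * γ0 τ with hM
  have hMnn : ∀ τ : ℝ, 0 ≤ τ → 0 ≤ M τ := by
    intro τ hτ
    have hg0 : 0 ≤ ∫ r in (0:ℝ)..τ, γ0 r :=
      intervalIntegral.integral_nonneg hτ (fun r _ => (hγnn r).1)
    have t1 : 0 ≤ l2 τ * γ0 τ := mul_nonneg (h3nn τ).2.2 (hγnn τ).1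
    have t2 : 0 ≤ C * (Real.exp (∫ r in (0:ℝ)..τ, γ1 r) * (1 + ∫ r in (0:ℝ)..τ, γ0 r)
        * (l1 τ + l2 τ * γ1 τ)) := by
      refine mul_nonneg hCpos.le (mul_nonneg (mul_nonneg (Real.exp_pos _).le (by linarith)) ?_)
      exact add_nonneg (h3nn τ).2.1 (mul_nonneg (h3nn τ).2.2 (hγnn τ).2)
    have t0 := (h3nn τ).1
    simp only [hM]
    linarith
  have hMint : IntegrableOn M (Ici 0) volume := (hl0i.add (h7a.const_mul C)).add h7b
  have hItail : Tendsto (fun T : ℝ => ∫ τ in Ioi T, M τ) atTop (𝓝 0) := by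
    have hio : IntegrableOn M (Ioi 0) volume := hMint.mono_set Ioi_subset_Ici_self
    have h2' : Tendsto (fun T : ℝ => ∫ τ in (0:ℝ)..T, M τ) atTop (𝓝 (∫ τ in Ioi 0, M τ)) :=
      intervalIntegral_tendsto_integral_Ioi 0 hio tendsto_id
    have h3' : Tendsto (fun T : ℝ => (∫ τ in Ioi (0:ℝ), M τ) - ∫ τ in (0:ℝ)..T, M τ)
        atTop (𝓝 0) := by
      have := (tendsto_const_nhds (x := ∫ τ in Ioi (0:ℝ), M τ) (f := atTop)).sub h2'
      simpa using this
    refine h3'.congr' ?_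
    filter_upwards [eventually_ge_atTop (0:ℝ)] with T hT
    have hunion : Ioc (0:ℝ) T ∪ Ioi T = Ioi 0 := Ioc_union_Ioi_eq_Ioi hT
    have hsum := setIntegral_union (Ioc_disjoint_Ioi (le_refl T)) measurableSet_Ioi
      (hio.mono_set (by rw [← hunion]; exact subset_union_left))
      (hio.mono_set (by rw [← hunion]; exact subset_union_right)) (f := M) (μ := volume)
    rw [hunion] at hsum
    rw [intervalIntegral.integral_of_le hT]
    linarith
  have hev : ∀ᶠ T : ℝ in atTop, (∫ τ in Ioi T, M τ) < ε := hItail.eventually_lt_const hε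
  obtain ⟨T₁, hT₁⟩ := eventually_atTop.1 hev
  refine ⟨max t (max T₁ 0), fun T hTge arc hadm => ?_⟩
  have htT : t ≤ T := le_trans (le_max_left _ _) hTge
  have hT0 : 0 ≤ T := le_trans (le_trans (le_max_right _ _) (le_max_right t _)) hTge
  have hT1T : T₁ ≤ T := le_trans (le_trans (le_max_left _ _) (le_max_right t _)) hTge
  set S : Set ℝ := {r : ℝ | ∃ b : Arc E, Admissible Γ T (arc.x T) b ∧
    Tendsto (fun T' : ℝ => ∫ s in T..T', L s (b.x s) (b.dx s)) atTop (𝓝 r)} with hSdef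
  have hkey : ∀ r ∈ S, |r| ≤ ε := by
    rintro r ⟨b, hb, htend⟩
    have hxa : ‖arc.x T‖ ≤ (‖ξ‖ + ∫ τ in t..T, γ0 τ) * Real.exp (∫ τ in t..T, γ1 τ) := by
      have := arc_gronwall ⟨hγnn, hγ0i, hγ1i, hγbd, hγlip⟩ arc t ht hadm.2 T htT
      rwa [hadm.1] at this
    have hbx : ∀ τ : ℝ, T ≤ τ →
        ‖b.x τ‖ ≤ C * ((1 + ∫ r in (0:ℝ)..τ, γ0 r) * Real.exp (∫ r in (0:ℝ)..τ, γ1 r)) := by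
      intro τ hτ
      have hgb := arc_gronwall ⟨hγnn, hγ0i, hγ1i, hγbd, hγlip⟩ b T hT0 hb.2 τ hτ
      rw [hb.1] at hgb
      have s00 : (∫ r in (0:ℝ)..t, γ0 r) + ((∫ r in t..T, γ0 r) + ∫ r in T..τ, γ0 r)
          = ∫ r in (0:ℝ)..τ, γ0 r := by
        rw [intervalIntegral.integral_add_adjacent_intervals
          (intInt_of_locInt hγ0i ht htT) (intInt_of_locInt hγ0i (le_trans ht htT) hτ)]
        exact intervalIntegral.integral_add_adjacent_intervals
          (intInt_of_locInt hγ0i le_rfl ht) (intInt_of_locInt hγ0i ht (le_trans htT hτ))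
      have s10 : (∫ r in (0:ℝ)..t, γ1 r) + ((∫ r in t..T, γ1 r) + ∫ r in T..τ, γ1 r)
          = ∫ r in (0:ℝ)..τ, γ1 r := by
        rw [intervalIntegral.integral_add_adjacent_intervals
          (intInt_of_locInt hγ1i ht htT) (intInt_of_locInt hγ1i (le_trans ht htT) hτ)]
        exact intervalIntegral.integral_add_adjacent_intervals
          (intInt_of_locInt hγ1i le_rfl ht) (intInt_of_locInt hγ1i ht (le_trans htT hτ))
      have hcb := combine_bound ‖ξ‖ (∫ r in t..T, γ0 r) (∫ r in T..τ, γ0 r)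
        (∫ r in (0:ℝ)..t, γ0 r) (∫ r in t..T, γ1 r) (∫ r in T..τ, γ1 r)
        (∫ r in (0:ℝ)..t, γ1 r) (norm_nonneg ξ)
        (intervalIntegral.integral_nonneg htT (fun r _ => (hγnn r).1))
        (intervalIntegral.integral_nonneg hτ (fun r _ => (hγnn r).1))
        (intervalIntegral.integral_nonneg ht (fun r _ => (hγnn r).1))
        (intervalIntegral.integral_nonneg htT (fun r _ => (hγnn r).2))
        (intervalIntegral.integral_nonneg hτ (fun r _ => (hγnn r).2))
        (intervalIntegral.integral_nonneg ht (fun r _ => (hγnn r).2))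
      rw [s00, s10] at hcb
      calc ‖b.x τ‖ ≤ (‖arc.x T‖ + ∫ r in T..τ, γ0 r) * Real.exp (∫ r in T..τ, γ1 r) := hgb
        _ ≤ ((‖ξ‖ + ∫ r in t..T, γ0 r) * Real.exp (∫ r in t..T, γ1 r) + ∫ r in T..τ, γ0 r)
            * Real.exp (∫ r in T..τ, γ1 r) := by
            have := Real.exp_pos (∫ r in T..τ, γ1 r)
            nlinarith
        _ ≤ C * ((1 + ∫ r in (0:ℝ)..τ, γ0 r) * Real.exp (∫ r in (0:ℝ)..τ, γ1 r)) := hcb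
    have h3ae' := ae_restrict_of_ae_restrict_of_subset (Ici_subset_Ici.2 hT0) h3ae
    have hLbd : ∀ᵐ τ ∂(volume.restrict (Ici T)), |L τ (b.x τ) (b.dx τ)| ≤ M τ := by
      filter_upwards [hb.2, h3ae', ae_restrict_mem measurableSet_Ici] with τ hmem hLip hτT
      obtain ⟨hL00, hLlip⟩ := hLip
      have hτ0 : (0:ℝ) ≤ τ := le_trans hT0 hτT
      have hdx : ‖b.dx τ‖ ≤ γ0 τ + γ1 τ * ‖b.x τ‖ :=
        Hyp6.norm_mem_le ⟨hγnn, hγ0i, hγ1i, hγbd, hγlip⟩ hτ0 hmem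
      have hxb := hbx τ hτT
      have ha1 : |L τ (b.x τ) (b.dx τ)| ≤ |L τ (b.x τ) (b.dx τ) - L τ 0 0| + |L τ 0 0| := by
        calc |L τ (b.x τ) (b.dx τ)| = |(L τ (b.x τ) (b.dx τ) - L τ 0 0) + L τ 0 0| := by
              rw [sub_add_cancel]
          _ ≤ _ := abs_add_le _ _
      have ha2 := hLlip (b.x τ) (b.dx τ) 0 0
      rw [sub_zero, sub_zero] at ha2
      have hl1nn := (h3nn τ).2.1
      have hl2nn := (h3nn τ).2.2
      have hγ1nn := (hγnn τ).2
      set R : ℝ := C * ((1 + ∫ r in (0:ℝ)..τ, γ0 r) * Real.exp (∫ r in (0:ℝ)..τ, γ1 r)) with hR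
      have b1 : l1 τ * ‖b.x τ‖ ≤ l1 τ * R := mul_le_mul_of_nonneg_left hxb hl1nn
      have b2 : l2 τ * ‖b.dx τ‖ ≤ l2 τ * γ0 τ + l2 τ * γ1 τ * R := by
        have h9 : γ1 τ * ‖b.x τ‖ ≤ γ1 τ * R := mul_le_mul_of_nonneg_left hxb hγ1nn
        have h10 : ‖b.dx τ‖ ≤ γ0 τ + γ1 τ * R := by linarith
        nlinarith
      have hMτ : M τ = l0 τ + (l1 τ + l2 τ * γ1 τ) * R + l2 τ * γ0 τ := by
        simp only [hM, hR]; ring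
      rw [hMτ]
      linarith
    have hbnd : ∀ T' : ℝ, T ≤ T' →
        |∫ s in T..T', L s (b.x s) (b.dx s)| ≤ ∫ τ in Ioi T, M τ := by
      intro T' hTT'
      have hae2 : ∀ᵐ τ ∂(volume.restrict (Set.uIoc T T')), ‖L τ (b.x τ) (b.dx τ)‖ ≤ M τ := by
        have hsub : Set.uIoc T T' ⊆ Ici T := by
          rw [uIoc_of_le hTT']; exact fun x hx => hx.1.le
        filter_upwards [ae_restrict_of_ae_restrict_of_subset hsub hLbd] with τ h
        simpa [Real.norm_eq_abs] using h
      have hMii : IntervalIntegrable M volume T T' :=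
        intInt_of_locInt (fun T'' => hMint.mono_set Icc_subset_Ici_self) hT0 hTT'
      have hn1 := intervalIntegral.norm_integral_le_abs_of_norm_le hae2 hMii
      have hMnonneg : 0 ≤ ∫ τ in T..T', M τ :=
        intervalIntegral.integral_nonneg hTT' (fun τ hτ => hMnn τ (le_trans hT0 hτ.1))
      have hn2 : (∫ τ in T..T', M τ) ≤ ∫ τ in Ioi T, M τ := by
        rw [intervalIntegral.integral_of_le hTT']
        refine setIntegral_mono_set (hMint.mono_set (fun x hx => le_trans hT0 hx.le)) ?_ ?_
        · refine (ae_restrict_iff' measurableSet_Ioi).2 (ae_of_all _ fun τ hτ => ?_)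
          exact hMnn τ (le_trans hT0 hτ.le)
        · exact HasSubset.Subset.eventuallyLE Ioc_subset_Ioi_self
      calc |∫ s in T..T', L s (b.x s) (b.dx s)| ≤ |∫ τ in T..T', M τ| := hn1
        _ = ∫ τ in T..T', M τ := abs_of_nonneg hMnonneg
        _ ≤ ∫ τ in Ioi T, M τ := hn2
    have habs : Tendsto (fun T' : ℝ => |∫ s in T..T', L s (b.x s) (b.dx s)|) atTop (𝓝 |r|) :=
      htend.abs
    have hle : |r| ≤ ∫ τ in Ioi T, M τ :=
      le_of_tendsto habs (by filter_upwards [eventually_ge_atTop T] with T' h using hbnd T' h)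
    exact le_trans hle (hT₁ T hT1T).le
  have hV : valueFun L Γ T (arc.x T) = sInf S := rfl
  rw [hV]
  rcases eq_empty_or_nonempty S with hS | hS
  · rw [hS, Real.sInf_empty, abs_zero]
    exact hε.le
  · obtain ⟨r0, hr0⟩ := hS
    have hlb : ∀ r' ∈ S, -ε ≤ r' := fun r' hr' => (abs_le.1 (hkey r' hr')).1
    have hle1 : -ε ≤ sInf S := le_csInf ⟨r0, hr0⟩ hlb
    have hle2 : sInf S ≤ r0 := csInf_le ⟨-ε, fun r' hr' => hlb r' hr'⟩ hr0
    rw [abs_le]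
    exact ⟨hle1, le_trans hle2 (abs_le.1 (hkey r0 hr0)).2⟩
end

section
/- Let E be a separable Banach space. Then every locally absolutely continuous function p : ℝ₊ → E* possesses a weak* derivative ṗ(t) at a.e. t ∈ ℝ₊; that is, for a.e. t there exists x* ∈ E* such that ⟨(p(t+h) − p(t))/h, x⟩ → ⟨x*, x⟩ as h → 0, for every x ∈ E. -/
open Filter Topology MeasureTheory Set

variable {E : Type*} [NormedAddCommGroup E] [NormedSpace ℝ E]

/-- Local absolute continuity of a function on `ℝ₊`. -/
def LocAbsCont {F : Type*} [NormedAddCommGroup F] (p : ℝ → F) : Prop :=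
  ∀ τ : ℝ, 0 < τ → ∀ ε : ℝ, 0 < ε → ∃ δ > (0:ℝ), ∀ n : ℕ, ∀ t s : Fin n → ℝ,
    (∀ i, 0 ≤ t i ∧ t i ≤ s i ∧ s i ≤ τ) →
    (∀ i j : Fin n, i < j → s i ≤ t j) →
    (∑ i, (s i - t i)) < δ → (∑ i, ‖p (s i) - p (t i)‖) < ε

/-- `q` is the weak* derivative of `p : ℝ₊ → E*` at `t`. -/
def HasWeakStarDerivAt (p : ℝ → E →L[ℝ] ℝ) (q : E →L[ℝ] ℝ) (t : ℝ) : Prop :=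
  ∀ x : E, Tendsto (fun h : ℝ => (p (t + h) x - p t x) / h) (𝓝[≠] (0:ℝ)) (𝓝 (q x))

namespace KomuraAux

variable {p : ℝ → E →L[ℝ] ℝ}

/-- On a window of length `< δ`, the variation is at most `ε`. -/
lemma window (hp : LocAbsCont p) {τ ε : ℝ} (hτ : 0 < τ) (hε : 0 < ε) :
    ∃ δ > (0:ℝ), ∀ a b : ℝ, 0 ≤ a → a ≤ b → b ≤ τ → b - a < δ →
      eVariationOn p (Icc a b) ≤ ENNReal.ofReal ε := by
  obtain ⟨δ, hδ, H⟩ := hp τ hτ ε hε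
  refine ⟨δ, hδ, fun a b ha hab hbτ hlt => ?_⟩
  refine iSup_le ?_
  rintro ⟨n, u, hu, hus⟩
  dsimp only
  have key : (∑ i ∈ Finset.range n, ‖p (u (i+1)) - p (u i)‖) < ε := by
    have h1 : ∀ i : Fin n, 0 ≤ u (i:ℕ) ∧ u (i:ℕ) ≤ u ((i:ℕ)+1) ∧ u ((i:ℕ)+1) ≤ τ := fun i =>
      ⟨ha.trans (mem_Icc.mp (hus _)).1, hu (Nat.le_succ _),
        (mem_Icc.mp (hus _)).2.trans hbτ⟩
    have h2 : ∀ i j : Fin n, i < j → u ((i:ℕ)+1) ≤ u (j:ℕ) := fun i j hij =>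
      hu (Nat.succ_le_of_lt hij)
    have h3 : (∑ i : Fin n, (u ((i:ℕ)+1) - u (i:ℕ))) < δ := by
      rw [Fin.sum_univ_eq_sum_range (fun i => u (i+1) - u i) n, Finset.sum_range_sub u]
      have hb1 := (mem_Icc.mp (hus n)).2
      have hb2 := (mem_Icc.mp (hus 0)).1
      linarith
    have := H n (fun i => u (i:ℕ)) (fun i => u ((i:ℕ)+1)) h1 h2 h3
    rwa [Fin.sum_univ_eq_sum_range (fun i => ‖p (u (i+1)) - p (u i)‖) n] at this
  calc ∑ i ∈ Finset.range n, edist (p (u (i+1))) (p (u i))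
      = ENNReal.ofReal (∑ i ∈ Finset.range n, ‖p (u (i+1)) - p (u i)‖) := by
        rw [ENNReal.ofReal_sum_of_nonneg (fun i _ => norm_nonneg _)]
        exact Finset.sum_congr rfl fun i _ => by rw [edist_dist, dist_eq_norm]
    _ ≤ ENNReal.ofReal ε := ENNReal.ofReal_le_ofReal key.le

/-- Locally absolutely continuous maps have finite variation on compacts. -/
lemma bounded (hp : LocAbsCont p) {τ : ℝ} (hτ : 0 ≤ τ) :
    eVariationOn p (Icc 0 τ) ≠ ⊤ := by
  obtain ⟨δ, hδ, W⟩ := window hp (τ := τ + 1) (by linarith) one_pos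
  have main : ∀ n : ℕ, ∀ a b : ℝ, 0 ≤ a → a ≤ b → b ≤ τ → b - a ≤ n * (δ/2) →
      eVariationOn p (Icc a b) ≤ (n : ENNReal) := by
    intro n
    induction n with
    | zero =>
      intro a b ha hab hbτ hn
      have hab' : a = b := le_antisymm hab (by simpa using hn)
      subst hab'
      rw [Icc_self]
      simpa using eVariationOn.subsingleton p (subsingleton_singleton (a := a))
    | succ n ih =>
      intro a b ha hab hbτ hn
      set c := min b (a + δ/2) with hc
      have hac : a ≤ c := le_min hab (by linarith)
      have hcb : c ≤ b := min_le_left _ _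
      have split : eVariationOn p (Icc a c) + eVariationOn p (Icc c b)
          = eVariationOn p (Icc a b) := by
        simpa using eVariationOn.Icc_add_Icc p (s := univ) hac hcb (mem_univ c)
      have h1 : eVariationOn p (Icc a c) ≤ ENNReal.ofReal 1 := by
        refine W a c ha hac (by linarith [min_le_left b (a + δ/2)]) ?_
        have := min_le_right b (a + δ/2)
        linarith
      have h2 : eVariationOn p (Icc c b) ≤ (n : ENNReal) := by
        refine ih c b (ha.trans hac) hcb hbτ ?_
        push_cast at hn
        rcases min_cases b (a + δ/2) with ⟨h, _⟩ | ⟨h, _⟩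
        · rw [hc, h, sub_self]; positivity
        · rw [hc, h]; linarith
      calc eVariationOn p (Icc a b)
          = eVariationOn p (Icc a c) + eVariationOn p (Icc c b) := split.symm
        _ ≤ ENNReal.ofReal 1 + (n : ENNReal) := add_le_add h1 h2
        _ = ((n+1 : ℕ) : ENNReal) := by
            rw [ENNReal.ofReal_one]; push_cast; rw [add_comm]
  set n := ⌈τ / (δ/2)⌉₊ with hn
  have hτn : τ - 0 ≤ n * (δ/2) := by
    have h1 : τ / (δ/2) ≤ (n : ℝ) := Nat.le_ceil _
    have h2 : (0:ℝ) < δ/2 := by linarith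
    rw [sub_zero]
    calc τ = (τ / (δ/2)) * (δ/2) := by field_simp
      _ ≤ n * (δ/2) := by gcongr
  exact ne_top_of_le_ne_top (ENNReal.natCast_ne_top n) (main n 0 τ le_rfl hτ le_rfl hτn)

/-- The (truncated) variation function. -/
noncomputable def Vv (p : ℝ → E →L[ℝ] ℝ) (t : ℝ) : ℝ :=
  (eVariationOn p (Icc 0 (max t 0))).toReal

lemma Vv_mono (hp : LocAbsCont p) : Monotone (Vv p) := by
  intro t s hts
  exact ENNReal.toReal_mono (bounded hp (le_max_right s 0))
    (eVariationOn.mono p (Icc_subset_Icc le_rfl (max_le_max hts le_rfl)))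

lemma kineq (hp : LocAbsCont p) (a b : ℝ) (ha : 0 ≤ a) (hab : a ≤ b) :
    ‖p b - p a‖ ≤ Vv p b - Vv p a := by
  have hb : (0:ℝ) ≤ b := ha.trans hab
  have hsplit : eVariationOn p (Icc 0 a) + eVariationOn p (Icc a b)
      = eVariationOn p (Icc 0 b) := by
    simpa using eVariationOn.Icc_add_Icc p (s := univ) ha hab (mem_univ a)
  have hfin_b : eVariationOn p (Icc 0 b) ≠ ⊤ := bounded hp hb
  have hfin_a : eVariationOn p (Icc 0 a) ≠ ⊤ :=
    ne_top_of_le_ne_top hfin_b (eVariationOn.mono p (Icc_subset_Icc le_rfl hab))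
  have hfin_ab : eVariationOn p (Icc a b) ≠ ⊤ :=
    ne_top_of_le_ne_top hfin_b (by rw [← hsplit]; exact le_add_self)
  have hd : ‖p b - p a‖ ≤ (eVariationOn p (Icc a b)).toReal := by
    have h := eVariationOn.edist_le p (left_mem_Icc.mpr hab) (right_mem_Icc.mpr hab)
    rw [edist_dist] at h
    have h2 := ENNReal.toReal_mono hfin_ab h
    rwa [ENNReal.toReal_ofReal dist_nonneg, dist_eq_norm, norm_sub_rev] at h2
  have hV : Vv p b - Vv p a = (eVariationOn p (Icc a b)).toReal := by
    unfold Vv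
    rw [max_eq_left ha, max_eq_left hb, ← hsplit, ENNReal.toReal_add hfin_a hfin_ab]
    ring
  linarith

lemma mono_g (hp : LocAbsCont p) (x : E) :
    Monotone (fun t => ‖x‖ * Vv p t + p (max t 0) x) := by
  intro t s hts
  dsimp only
  set t' := max t 0 with ht'
  set s' := max s 0 with hs'
  have h0 : 0 ≤ t' := le_max_right _ _
  have h1 : t' ≤ s' := max_le_max hts le_rfl
  have h2 : ‖p s' - p t'‖ ≤ Vv p s' - Vv p t' := kineq hp t' s' h0 h1
  have hVt : Vv p t' = Vv p t := by unfold Vv; rw [max_eq_left h0]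
  have hVs : Vv p s' = Vv p s := by unfold Vv; rw [max_eq_left (h0.trans h1)]
  have habs : |p s' x - p t' x| ≤ ‖p s' - p t'‖ * ‖x‖ := by
    have h3 := (p s' - p t').le_opNorm x
    simpa [Real.norm_eq_abs] using h3
  have h4 : ‖p s' - p t'‖ * ‖x‖ ≤ (Vv p s' - Vv p t') * ‖x‖ :=
    mul_le_mul_of_nonneg_right h2 (norm_nonneg x)
  have h5 := (abs_le.mp habs).1
  rw [← hVt, ← hVs]
  nlinarith [norm_nonneg x]

lemma ae_diff (hp : LocAbsCont p) (x : E) :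
    ∀ᵐ t ∂(volume : Measure ℝ), DifferentiableAt ℝ (fun s => p (max s 0) x) t := by
  filter_upwards [(mono_g hp x).ae_differentiableAt, (Vv_mono hp).ae_differentiableAt]
    with t h1 h2
  have h3 : (fun s => p (max s 0) x)
      = fun s => (‖x‖ * Vv p s + p (max s 0) x) - ‖x‖ * Vv p s := by
    funext s; ring
  rw [h3]
  exact h1.sub (h2.const_mul ‖x‖)

lemma pointwise (hp : LocAbsCont p) {t : ℝ} (ht : 0 < t)
    (hV : DifferentiableAt ℝ (Vv p) t)
    (xs : ℕ → E) (hxs : DenseRange xs)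
    (hd : ∀ n, DifferentiableAt ℝ (fun s => p (max s 0) (xs n)) t) :
    ∃ q : E →L[ℝ] ℝ, HasWeakStarDerivAt p q t := by
  set F := 𝓝[≠] (0:ℝ) with hF
  haveI : F.NeBot := by rw [hF]; infer_instance
  set Q : ℝ → E →L[ℝ] ℝ := fun h => h⁻¹ • (p (t + h) - p t) with hQdef
  have hne : ∀ᶠ h in F, h ≠ 0 := by
    filter_upwards [self_mem_nhdsWithin] with h hh
    simpa using hh
  have hsmall : ∀ᶠ h in F, |h| < t := by
    have : ∀ᶠ h : ℝ in 𝓝 0, |h| < t := by simpa using eventually_abs_sub_lt (0:ℝ) ht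
    exact this.filter_mono nhdsWithin_le_nhds
  have hmap : Tendsto (fun h : ℝ => t + h) F (𝓝[≠] t) := by
    rw [tendsto_nhdsWithin_iff]
    constructor
    · have : Tendsto (fun h : ℝ => t + h) (𝓝 0) (𝓝 (t + 0)) :=
        tendsto_const_nhds.add tendsto_id
      rw [add_zero] at this
      exact this.mono_left nhdsWithin_le_nhds
    · filter_upwards [hne] with h hh
      simp only [mem_compl_iff, mem_singleton_iff]
      intro hc
      exact hh (by linarith)
  have hslope_gen : ∀ g : ℝ → ℝ, ∀ h : ℝ, slope g t (t + h) = (g (t + h) - g t) / h := by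
    intro g h
    rcases eq_or_ne h 0 with rfl | hh
    · simp [slope_def_field]
    · rw [slope_def_field, show t + h - t = h by ring]
  have hVslope : Tendsto (fun h => (Vv p (t + h) - Vv p t) / h) F (𝓝 (deriv (Vv p) t)) := by
    have h1 := hV.hasDerivAt
    rw [hasDerivAt_iff_tendsto_slope] at h1
    exact (h1.comp hmap).congr (fun h => hslope_gen (Vv p) h)
  set C := |deriv (Vv p) t| + 1 with hC
  have hC0 : (0:ℝ) < C := by positivity
  have hquot : ∀ᶠ h in F, |(Vv p (t + h) - Vv p t) / h - deriv (Vv p) t| < 1 := by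
    have := Metric.tendsto_nhds.mp hVslope 1 one_pos
    simpa [Real.dist_eq] using this
  have hQbdd : ∀ᶠ h in F, ‖Q h‖ ≤ C := by
    filter_upwards [hne, hsmall, hquot] with h h0 hlt hq
    have habs := abs_lt.mp hlt
    have ht0 : (0:ℝ) < t + h := by linarith [habs.1]
    have hnorm : ‖p (t + h) - p t‖ ≤ |Vv p (t + h) - Vv p t| := by
      rcases lt_or_gt_of_ne h0 with hneg | hpos
      · have hk := kineq hp (t + h) t ht0.le (by linarith)
        rw [norm_sub_rev]
        calc ‖p t - p (t + h)‖ ≤ Vv p t - Vv p (t + h) := hk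
          _ ≤ |Vv p (t + h) - Vv p t| := by
              rw [abs_sub_comm]; exact le_abs_self _
      · have hk := kineq hp t (t + h) ht.le (by linarith)
        exact hk.trans (le_abs_self _)
    have hQn : ‖Q h‖ = |h|⁻¹ * ‖p (t + h) - p t‖ := by
      simp only [hQdef]
      rw [norm_smul h⁻¹ (p (t + h) - p t), norm_inv, Real.norm_eq_abs]
    rw [hQn]
    have h2 : |h|⁻¹ * ‖p (t + h) - p t‖ ≤ |h|⁻¹ * |Vv p (t + h) - Vv p t| :=
      mul_le_mul_of_nonneg_left hnorm (inv_nonneg.mpr (abs_nonneg h))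
    have h3 : |h|⁻¹ * |Vv p (t + h) - Vv p t| = |(Vv p (t + h) - Vv p t) / h| := by
      rw [abs_div]; ring
    have h4 : |(Vv p (t + h) - Vv p t) / h| ≤ C := by
      have := abs_sub_abs_le_abs_sub ((Vv p (t + h) - Vv p t) / h) (deriv (Vv p) t)
      rw [hC]; linarith
    linarith [h2, h3 ▸ h2]
  have hconv : ∀ n, Tendsto (fun h => Q h (xs n)) F
      (𝓝 (deriv (fun s => p (max s 0) (xs n)) t)) := by
    intro n
    have h1 := (hd n).hasDerivAt
    rw [hasDerivAt_iff_tendsto_slope] at h1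
    have h2 := h1.comp hmap
    refine Tendsto.congr' ?_ h2
    filter_upwards [hne, hsmall] with h h0 hlt
    have habs := abs_lt.mp hlt
    have ht0 : (0:ℝ) < t + h := by linarith [habs.1]
    show slope (fun s => p (max s 0) (xs n)) t (t + h) = Q h (xs n)
    rw [hslope_gen (fun s => p (max s 0) (xs n)) h]
    simp only [max_eq_left ht0.le, max_eq_left ht.le, hQdef,
      ContinuousLinearMap.smul_apply, ContinuousLinearMap.sub_apply, smul_eq_mul]
    rw [div_eq_inv_mul]
  have hcauchy : ∀ x : E, ∃ l : ℝ, Tendsto (fun h => Q h x) F (𝓝 l) := by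
    intro x
    have hc : Cauchy (Filter.map (fun h => Q h x) F) := by
      rw [Metric.cauchy_iff]
      refine ⟨Filter.map_neBot, fun ε hε => ?_⟩
      obtain ⟨n, hn⟩ : ∃ n, ‖x - xs n‖ < ε / (4 * (C + 1)) := by
        obtain ⟨n, hn⟩ := Metric.denseRange_iff.mp hxs x (ε / (4 * (C + 1))) (by positivity)
        exact ⟨n, by rwa [dist_eq_norm] at hn⟩
      set L := deriv (fun s => p (max s 0) (xs n)) t with hL
      have hev : {h : ℝ | ‖Q h‖ ≤ C ∧ |Q h (xs n) - L| < ε / 4} ∈ F := by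
        have h2 : ∀ᶠ h in F, |Q h (xs n) - L| < ε / 4 := by
          have := Metric.tendsto_nhds.mp (hconv n) (ε / 4) (by positivity)
          simpa [Real.dist_eq] using this
        exact hQbdd.and h2
      refine ⟨(fun h => Q h x) '' {h | ‖Q h‖ ≤ C ∧ |Q h (xs n) - L| < ε / 4},
        image_mem_map hev, ?_⟩
      rintro _ ⟨h1, ⟨hb1, hl1⟩, rfl⟩ _ ⟨h2, ⟨hb2, hl2⟩, rfl⟩
      rw [Real.dist_eq]
      have key : ∀ h : ℝ, ‖Q h‖ ≤ C → |Q h x - Q h (xs n)| ≤ ε / 4 := by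
        intro h hb
        have e1 : Q h x - Q h (xs n) = Q h (x - xs n) := (map_sub (Q h) x (xs n)).symm
        rw [e1]
        have e2 : |Q h (x - xs n)| ≤ ‖Q h‖ * ‖x - xs n‖ := by
          simpa [Real.norm_eq_abs] using (Q h).le_opNorm (x - xs n)
        have e3 : ‖Q h‖ * ‖x - xs n‖ ≤ C * (ε / (4 * (C + 1))) :=
          mul_le_mul hb hn.le (norm_nonneg _) hC0.le
        have e4 : C * (ε / (4 * (C + 1))) ≤ (C + 1) * (ε / (4 * (C + 1))) :=
          mul_le_mul_of_nonneg_right (by linarith) (by positivity)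
        have e5 : (C + 1) * (ε / (4 * (C + 1))) = ε / 4 := by
          field_simp
        linarith
      have k1 := key h1 hb1
      have k2 := key h2 hb2
      have t1 := abs_sub_le (Q h1 x) (Q h1 (xs n)) (Q h2 x)
      have t2 := abs_sub_le (Q h1 (xs n)) L (Q h2 x)
      have t3 := abs_sub_le L (Q h2 (xs n)) (Q h2 x)
      have t4 : |L - Q h2 (xs n)| = |Q h2 (xs n) - L| := abs_sub_comm _ _
      have t5 : |Q h2 (xs n) - Q h2 x| = |Q h2 x - Q h2 (xs n)| := abs_sub_comm _ _
      linarith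
    obtain ⟨l, hl⟩ := CompleteSpace.complete hc
    exact ⟨l, hl⟩
  choose Lx hLx using hcauchy
  have hadd : ∀ x y, Lx (x + y) = Lx x + Lx y := by
    intro x y
    refine tendsto_nhds_unique (hLx (x + y)) ?_
    have e : (fun h => Q h (x + y)) = fun h => Q h x + Q h y := by
      funext h; exact map_add (Q h) x y
    rw [e]
    exact (hLx x).add (hLx y)
  have hsmul : ∀ (c : ℝ) (x : E), Lx (c • x) = c * Lx x := by
    intro c x
    refine tendsto_nhds_unique (hLx (c • x)) ?_
    have e : (fun h => Q h (c • x)) = fun h => c * Q h x := by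
      funext h; rw [ContinuousLinearMap.map_smul, smul_eq_mul]
    rw [e]
    exact (hLx x).const_mul c
  have hbound : ∀ x, |Lx x| ≤ C * ‖x‖ := by
    intro x
    refine le_of_tendsto (hLx x).abs ?_
    filter_upwards [hQbdd] with h hb
    calc |Q h x| ≤ ‖Q h‖ * ‖x‖ := by
          simpa [Real.norm_eq_abs] using (Q h).le_opNorm x
      _ ≤ C * ‖x‖ := mul_le_mul_of_nonneg_right hb (norm_nonneg x)
  refine ⟨LinearMap.mkContinuous
    { toFun := Lx, map_add' := hadd, map_smul' := hsmul } C
    (fun x => by simpa [Real.norm_eq_abs] using hbound x), ?_⟩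
  intro x
  refine (hLx x).congr (fun h => ?_)
  rw [hQdef]
  simp only [ContinuousLinearMap.smul_apply, ContinuousLinearMap.sub_apply, smul_eq_mul]
  rw [div_eq_inv_mul]

end KomuraAux

/-- Lemma (Komura): every locally absolutely continuous `p : ℝ₊ → E*` with `E`
separable possesses a weak* derivative almost everywhere. -/
theorem locAbsCont_hasWeakStarDerivAt_ae
    [CompleteSpace E] [TopologicalSpace.SeparableSpace E]
    (p : ℝ → E →L[ℝ] ℝ) (hp : LocAbsCont p) :
    ∀ᵐ t ∂(volume.restrict (Ici (0:ℝ))), ∃ q : E →L[ℝ] ℝ,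
      HasWeakStarDerivAt p q t := by
  haveI : Nonempty E := ⟨0⟩
  set xs := TopologicalSpace.denseSeq E with hxsdef
  have hxs := TopologicalSpace.denseRange_denseSeq E
  have h1 : ∀ᵐ t ∂(volume : Measure ℝ), DifferentiableAt ℝ (KomuraAux.Vv p) t :=
    (KomuraAux.Vv_mono hp).ae_differentiableAt
  have h2 : ∀ᵐ t ∂(volume : Measure ℝ),
      ∀ n, DifferentiableAt ℝ (fun s => p (max s 0) (xs n)) t :=
    ae_all_iff.mpr fun n => KomuraAux.ae_diff hp (xs n)
  have h3 : ∀ᵐ t ∂(volume.restrict (Ici (0:ℝ))),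
      DifferentiableAt ℝ (KomuraAux.Vv p) t ∧
        ∀ n, DifferentiableAt ℝ (fun s => p (max s 0) (xs n)) t :=
    (h1.and h2).filter_mono (ae_mono Measure.restrict_le_self)
  have h4 : ∀ᵐ t ∂(volume.restrict (Ici (0:ℝ))), t ∈ Ici (0:ℝ) :=
    ae_restrict_mem measurableSet_Ici
  have h5 : ∀ᵐ t ∂(volume.restrict (Ici (0:ℝ))), t ≠ 0 := by
    refine Filter.Eventually.filter_mono (ae_mono Measure.restrict_le_self) ?_
    rw [ae_iff]
    have : {t : ℝ | ¬ t ≠ 0} = {0} := by ext t; simp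
    rw [this]
    exact Real.volume_singleton
  filter_upwards [h3, h4, h5] with t htd ht0 htne
  exact KomuraAux.pointwise hp (lt_of_le_of_ne ht0 (Ne.symm htne)) htd.1 xs hxs htd.2
end

section
/- Let E be a separable Banach space, let p : ℝ₊ → E* be locally absolutely continuous, and let x ∈ W^{1,1}_loc(ℝ₊,E). Then for a.e. t ∈ ℝ₊, the function s ↦ ⟨p(s), x(s)⟩ is differentiable at t with derivative d/dt ⟨p(t),x(t)⟩ = ⟨ṗ(t), x(t)⟩ + ⟨p(t), ẋ(t)⟩, where ṗ(t) denotes the weak* derivative of p at t (which exists a.e.) and ẋ(t) the strong derivative of x. -/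
open Filter Topology MeasureTheory Set

variable {E : Type*} [NormedAddCommGroup E] [NormedSpace ℝ E]

lemma LocAbsCont.evar_small {F : Type*} [NormedAddCommGroup F] {p : ℝ → F}
    (hp : LocAbsCont p) {τ : ℝ} (hτ : 0 < τ) :
    ∃ δ > (0:ℝ), ∀ a b : ℝ, 0 ≤ a → a ≤ b → b ≤ τ → b - a < δ →
      eVariationOn p (Icc a b) ≤ 1 := by
  obtain ⟨δ, hδ, H⟩ := hp τ hτ 1 one_pos
  refine ⟨δ, hδ, fun a b ha hab hbτ hd => ?_⟩
  refine iSup_le ?_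
  rintro ⟨n, ⟨u, hu, us⟩⟩
  have key : (∑ i : Fin n, ‖p (u (i+1)) - p (u i)‖) < 1 := by
    refine H n (fun i => u i) (fun i => u (i+1)) ?_ ?_ ?_
    · exact fun i => ⟨ha.trans (us i).1, hu (Nat.le_succ _), (us (i+1)).2.trans hbτ⟩
    · exact fun i j hij => hu (Nat.succ_le_of_lt hij)
    · have : (∑ i : Fin n, (u (i+1) - u (i:ℕ))) = u n - u 0 := by
        rw [Fin.sum_univ_eq_sum_range (fun i => u (i+1) - u i)]
        exact Finset.sum_range_sub u n
      rw [this]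
      exact lt_of_le_of_lt (by linarith [(us n).2, (us 0).1]) hd
  calc (∑ i ∈ Finset.range n, edist (p (u (i + 1))) (p (u i)))
      = ENNReal.ofReal (∑ i ∈ Finset.range n, ‖p (u (i+1)) - p (u i)‖) := by
        rw [ENNReal.ofReal_sum_of_nonneg (fun i _ => norm_nonneg _)]
        exact Finset.sum_congr rfl fun i _ => by rw [edist_dist, dist_eq_norm]
    _ ≤ 1 := by
        rw [← Fin.sum_univ_eq_sum_range (fun i => ‖p (u (i+1)) - p (u i)‖)] 
        simpa using ENNReal.ofReal_le_ofReal key.le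

lemma LocAbsCont.evar_lt_top {F : Type*} [NormedAddCommGroup F] {p : ℝ → F}
    (hp : LocAbsCont p) {b : ℝ} (hb : 0 ≤ b) :
    eVariationOn p (Icc 0 b) ≠ ⊤ := by
  obtain ⟨δ, hδ, H⟩ := hp.evar_small (show (0:ℝ) < b + 1 by linarith)
  have main : ∀ k : ℕ, eVariationOn p (Icc 0 (min (k * (δ/2)) b)) ≤ k := by
    intro k
    induction k with
    | zero =>
      simp only [Nat.cast_zero, zero_mul, min_eq_left hb]
      have h0 : eVariationOn p (Icc (0:ℝ) 0) = 0 :=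
        eVariationOn.subsingleton p
          (fun x hx y hy => le_antisymm (hx.2.trans hy.1) (hy.2.trans hx.1))
      simp [h0]
    | succ k ih =>
      push_cast
      set c := min ((k:ℝ) * (δ/2)) b with hc
      set c' := min (((k:ℝ)+1) * (δ/2)) b with hc'
      have hcc' : c ≤ c' := min_le_min (by nlinarith) le_rfl
      have hc0 : 0 ≤ c := le_min (by positivity) hb
      have hsplit : eVariationOn p (Icc 0 c) + eVariationOn p (Icc c c')
          = eVariationOn p (Icc 0 c') := by
        have := eVariationOn.Icc_add_Icc p (s := univ) hc0 hcc' (mem_univ c)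
        simpa using this
      have hsmall : eVariationOn p (Icc c c') ≤ 1 := by
        refine H c c' hc0 hcc' (le_trans (min_le_right _ _) (by linarith)) ?_
        have : c' - c ≤ δ/2 := by
          rcases le_total ((k:ℝ) * (δ/2)) b with h | h
          · have : c = (k:ℝ) * (δ/2) := min_eq_left h
            have h2 : c' ≤ ((k:ℝ)+1) * (δ/2) := min_le_left _ _
            rw [this]; linarith
          · have h1 : c = b := min_eq_right h
            have h2 : c' ≤ b := min_le_right _ _
            rw [h1]; linarith
        linarith
      rw [← hsplit]
      exact add_le_add ih hsmall
  obtain ⟨k, hk⟩ := exists_nat_ge (b / (δ/2))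
  have hδ2 : (0:ℝ) < δ/2 := by linarith
  have hbk : b ≤ (k:ℝ) * (δ/2) := by
    have := (div_le_iff₀ hδ2).1 hk
    linarith
  have := main k
  rw [min_eq_right hbk] at this
  exact ne_top_of_le_ne_top (ENNReal.natCast_ne_top k) this

lemma LocAbsCont.locBV {F : Type*} [NormedAddCommGroup F] {p : ℝ → F}
    (hp : LocAbsCont p) : LocallyBoundedVariationOn p (Ici 0) := by
  intro a b ha hb
  refine ne_top_of_le_ne_top (hp.evar_lt_top (le_max_right b 0))
    (eVariationOn.mono _ ?_)
  rintro x ⟨hx0, hxa, hxb⟩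
  exact ⟨hx0, hxb.trans (le_max_left _ _)⟩

noncomputable def vFun {F : Type*} [NormedAddCommGroup F] (p : ℝ → F) : ℝ → ℝ :=
  fun t => variationOnFromTo p (Ici 0) 0 (max t 0)

lemma vFun_mono {F : Type*} [NormedAddCommGroup F] {p : ℝ → F} (hp : LocAbsCont p) :
    Monotone (vFun p) := fun s t hst =>
  variationOnFromTo.monotoneOn hp.locBV self_mem_Ici
    (le_max_right s 0) (le_max_right t 0) (max_le_max hst le_rfl)

lemma vFun_max {F : Type*} [NormedAddCommGroup F] (p : ℝ → F) (r : ℝ) :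
    vFun p (max r 0) = vFun p r := by
  unfold vFun
  rw [max_eq_left (le_max_right r 0)]

lemma vFun_key {F : Type*} [NormedAddCommGroup F] {p : ℝ → F} (hp : LocAbsCont p)
    {a b : ℝ} (ha : 0 ≤ a) (hab : a ≤ b) :
    ‖p b - p a‖ ≤ vFun p b - vFun p a := by
  have hb : 0 ≤ b := ha.trans hab
  have hva : vFun p a = variationOnFromTo p (Ici 0) 0 a := by
    unfold vFun; rw [max_eq_left ha]
  have hvb : vFun p b = variationOnFromTo p (Ici 0) 0 b := by
    unfold vFun; rw [max_eq_left hb]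
  have hadd : variationOnFromTo p (Ici 0) 0 a + variationOnFromTo p (Ici 0) a b
      = variationOnFromTo p (Ici 0) 0 b :=
    variationOnFromTo.add hp.locBV self_mem_Ici ha hb
  have hle : ‖p b - p a‖ ≤ variationOnFromTo p (Ici 0) a b := by
    rw [variationOnFromTo.eq_of_le _ _ hab, ← dist_eq_norm, dist_edist]
    apply ENNReal.toReal_mono (hp.locBV a b ha hb)
    exact eVariationOn.edist_le p ⟨hb, hab, le_rfl⟩ ⟨ha, le_rfl, hab⟩
  rw [hva, hvb]; linarith

lemma mFun_mono (p : ℝ → E →L[ℝ] ℝ) (hp : LocAbsCont p) (d : E) :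
    Monotone (fun t => ‖d‖ * vFun p t - p (max t 0) d) := by
  intro s t hst
  have h1 : ‖p (max t 0) - p (max s 0)‖ ≤ vFun p t - vFun p s := by
    have := vFun_key hp (le_max_right s 0) (max_le_max hst le_rfl)
    rwa [vFun_max, vFun_max] at this
  have h2 : p (max t 0) d - p (max s 0) d ≤ ‖p (max t 0) - p (max s 0)‖ * ‖d‖ := by
    calc p (max t 0) d - p (max s 0) d = (p (max t 0) - p (max s 0)) d := by
          rw [ContinuousLinearMap.sub_apply]
      _ ≤ ‖(p (max t 0) - p (max s 0)) d‖ := le_abs_self _ |>.trans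
          (le_of_eq (Real.norm_eq_abs _).symm)
      _ ≤ ‖p (max t 0) - p (max s 0)‖ * ‖d‖ := ContinuousLinearMap.le_opNorm _ d
  have h3 := mul_le_mul_of_nonneg_right h1 (norm_nonneg d)
  simp only
  nlinarith
lemma phi_ae (p : ℝ → E →L[ℝ] ℝ) (hp : LocAbsCont p) (d : E) :
    ∀ᵐ t : ℝ, DifferentiableAt ℝ (fun s => p (max s 0) d) t := by
  filter_upwards [(vFun_mono hp).ae_differentiableAt,
    (mFun_mono p hp d).ae_differentiableAt] with t h1 h2
  have heq : (fun s => p (max s 0) d)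
      = fun s => ‖d‖ * vFun p s - (‖d‖ * vFun p s - p (max s 0) d) := by
    funext s; ring
  rw [heq]
  exact (h1.const_mul _).sub h2

lemma pointwise_good [CompleteSpace E] (p : ℝ → E →L[ℝ] ℝ) (hp : LocAbsCont p)
    {D : Set E} (hD : Dense D) {t : ℝ} (ht : 0 < t)
    {x : ℝ → E} {xd : E} (hx : HasDerivAt x xd t)
    (hv : DifferentiableAt ℝ (vFun p) t)
    (hd : ∀ d ∈ D, DifferentiableAt ℝ (fun s : ℝ => p (max s 0) d) t) :
    ∃ q : E →L[ℝ] ℝ, HasWeakStarDerivAt p q t ∧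
      HasDerivAt (fun s : ℝ => p s (x s)) (q (x t) + p t xd) t := by
  have htrans : Tendsto (fun h : ℝ => t + h) (𝓝[≠] (0:ℝ)) (𝓝[≠] t) := by
    apply tendsto_nhdsWithin_of_tendsto_nhds_of_eventually_within
    · have h0 : Tendsto (fun h : ℝ => t + h) (𝓝 0) (𝓝 (t + 0)) :=
        (continuous_const.add continuous_id).tendsto 0
      rw [add_zero] at h0
      exact h0.mono_left nhdsWithin_le_nhds
    · filter_upwards [self_mem_nhdsWithin] with h hh
      simpa using hh
  have htrans' : Tendsto (fun s : ℝ => s - t) (𝓝[≠] t) (𝓝[≠] (0:ℝ)) := by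
    apply tendsto_nhdsWithin_of_tendsto_nhds_of_eventually_within
    · have h0 : Tendsto (fun s : ℝ => s - t) (𝓝 t) (𝓝 (t - t)) :=
        (continuous_id.sub continuous_const).tendsto t
      rw [sub_self] at h0
      exact h0.mono_left nhdsWithin_le_nhds
    · filter_upwards [self_mem_nhdsWithin] with s hs
      simpa [sub_eq_zero] using hs
  have hne : ∀ᶠ h in 𝓝[≠] (0:ℝ), h ≠ 0 := by
    filter_upwards [self_mem_nhdsWithin] with h hh
    simpa using hh
  have hsne : ∀ᶠ s in 𝓝[≠] t, s ≠ t := by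
    filter_upwards [self_mem_nhdsWithin] with s hs
    simpa using hs
  have hpos : ∀ᶠ h in 𝓝[≠] (0:ℝ), 0 < t + h := by
    have h0 : ∀ᶠ h in 𝓝 (0:ℝ), h ∈ Ioo (-t) t := Ioo_mem_nhds (by linarith) ht
    filter_upwards [h0.filter_mono nhdsWithin_le_nhds] with h hh
    have := hh.1; linarith
  set V := deriv (vFun p) t with hVdef
  set C : ℝ := |V| + 1 with hCdef
  have hCpos : 0 < C := by positivity
  have hVt : Tendsto (slope (vFun p) t) (𝓝[≠] t) (𝓝 V) :=
    hasDerivAt_iff_tendsto_slope.1 hv.hasDerivAt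
  -- eventual norm bound on p (t+h) - p t
  have hnb : ∀ᶠ h in 𝓝[≠] (0:ℝ), ‖p (t + h) - p t‖ ≤ C * |h| := by
    have h1 : ∀ᶠ h in 𝓝[≠] (0:ℝ), |slope (vFun p) t (t + h)| < C := by
      have h2 : Tendsto (fun h : ℝ => |slope (vFun p) t (t + h)|) (𝓝[≠] (0:ℝ)) (𝓝 |V|) :=
        (hVt.comp htrans).abs
      exact h2.eventually_lt_const (by simp [hCdef])
    filter_upwards [h1, hpos, hne] with h hs hp0 hh
    have hslope : slope (vFun p) t (t + h) = (vFun p (t + h) - vFun p t) / h := by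
      rw [slope_def_field, add_sub_cancel_left]
    have hkey : ‖p (t + h) - p t‖ ≤ |vFun p (t + h) - vFun p t| := by
      rcases le_or_gt 0 h with h0 | h0
      · exact (vFun_key hp ht.le (by linarith)).trans (le_abs_self _)
      · calc ‖p (t + h) - p t‖ = ‖p t - p (t + h)‖ := norm_sub_rev _ _
          _ ≤ vFun p t - vFun p (t + h) := vFun_key hp hp0.le (by linarith)
          _ ≤ |vFun p (t + h) - vFun p t| := by
              rw [abs_sub_comm]; exact le_abs_self _
    have habs : |vFun p (t + h) - vFun p t| = |slope (vFun p) t (t + h)| * |h| := by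
      rw [hslope, abs_div]
      field_simp
    calc ‖p (t + h) - p t‖ ≤ |vFun p (t + h) - vFun p t| := hkey
      _ = |slope (vFun p) t (t + h)| * |h| := habs
      _ ≤ C * |h| := mul_le_mul_of_nonneg_right hs.le (abs_nonneg _)
  -- continuity of p in norm at t
  have pcont : Tendsto (fun s : ℝ => ‖p s - p t‖) (𝓝[≠] t) (𝓝 0) := by
    have hev : ∀ᶠ s in 𝓝[≠] t, ‖p s - p t‖ ≤ C * |s - t| := by
      filter_upwards [htrans'.eventually hnb] with s hs
      rwa [add_sub_cancel] at hs
    have hg : Tendsto (fun s : ℝ => C * |s - t|) (𝓝[≠] t) (𝓝 0) := by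
      have : Tendsto (fun s : ℝ => C * |s - t|) (𝓝 t) (𝓝 (C * |t - t|)) :=
        (continuous_const.mul ((continuous_id.sub continuous_const).abs)).tendsto t
      simp only [sub_self, abs_zero, mul_zero] at this
      exact this.mono_left nhdsWithin_le_nhds
    exact squeeze_zero' (.of_forall fun s => norm_nonneg _) hev hg
  set F : E → ℝ → ℝ := fun y h => (p (t + h) y - p t y) / h with hFdef
  have Fsub : ∀ (y d : E) (h : ℝ), F y h - F d h = F (y - d) h := by
    intro y d h
    simp only [hFdef, map_sub]
    ring
  have Fbound : ∀ y : E, ∀ᶠ h in 𝓝[≠] (0:ℝ), |F y h| ≤ C * ‖y‖ := by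
    intro y
    filter_upwards [hnb, hne] with h h1 h2
    have hnum : |p (t + h) y - p t y| ≤ C * |h| * ‖y‖ := by
      calc |p (t + h) y - p t y| = ‖(p (t + h) - p t) y‖ := by
            rw [ContinuousLinearMap.sub_apply, Real.norm_eq_abs]
        _ ≤ ‖p (t + h) - p t‖ * ‖y‖ := ContinuousLinearMap.le_opNorm _ y
        _ ≤ C * |h| * ‖y‖ := mul_le_mul_of_nonneg_right h1 (norm_nonneg _)
    rw [hFdef]
    simp only
    rw [abs_div, div_le_iff₀ (abs_pos.2 h2)]
    calc |p (t + h) y - p t y| ≤ C * |h| * ‖y‖ := hnum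
      _ = C * ‖y‖ * |h| := by ring
  have Fd : ∀ d ∈ D, ∃ c : ℝ, Tendsto (F d) (𝓝[≠] (0:ℝ)) (𝓝 c) := by
    intro d hdD
    have hφ := hasDerivAt_iff_tendsto_slope.1 (hd d hdD).hasDerivAt
    refine ⟨_, (hφ.comp htrans).congr' ?_⟩
    filter_upwards [hpos, hne] with h h1 h2
    show slope (fun s : ℝ => p (max s 0) d) t (t + h) = F d h
    rw [slope_def_field, add_sub_cancel_left, max_eq_left h1.le, max_eq_left ht.le]
  have Fconv : ∀ y : E, ∃ c : ℝ, Tendsto (F y) (𝓝[≠] (0:ℝ)) (𝓝 c) := by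
    intro y
    have hcauchy : Cauchy (map (F y) (𝓝[≠] (0:ℝ))) := by
      rw [Metric.cauchy_iff]
      refine ⟨map_neBot, fun ε hε => ?_⟩
      obtain ⟨d, hdD, hdist⟩ := hD.exists_dist_lt y (show (0:ℝ) < ε / (8 * C) by positivity)
      obtain ⟨c, hc⟩ := Fd d hdD
      have hyd : C * ‖y - d‖ < ε / 8 := by
        rw [← dist_eq_norm] at *
        have : C * dist y d < C * (ε / (8 * C)) := by
          exact mul_lt_mul_of_pos_left hdist hCpos
        rw [mul_div_assoc'] at this
        calc C * dist y d < C * ε / (8 * C) := this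
          _ = ε / 8 := by field_simp
      refine ⟨{z : ℝ | dist z c < ε / 3}, ?_, ?_⟩
      · rw [mem_map]
        have hev : ∀ᶠ h in 𝓝[≠] (0:ℝ), dist (F y h) c < ε / 3 := by
          filter_upwards [Fbound (y - d), hc.eventually (Metric.ball_mem_nhds c
            (show (0:ℝ) < ε / 8 by positivity))] with h h1 h2
          have h3 : |F y h - F d h| ≤ C * ‖y - d‖ := by rw [Fsub]; exact h1
          have h4 : dist (F d h) c < ε / 8 := h2
          rw [Real.dist_eq] at h4 ⊢
          have h5 : |F y h - c| ≤ |F y h - F d h| + |F d h - c| := abs_sub_le _ _ _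
          nlinarith
        exact hev
      · intro z hz w hw
        rw [mem_setOf_eq] at hz hw
        calc dist z w ≤ dist z c + dist c w := dist_triangle _ _ _
          _ = dist z c + dist w c := by rw [dist_comm c w]
          _ < ε := by linarith
    obtain ⟨c, hc⟩ := CompleteSpace.complete hcauchy
    exact ⟨c, hc⟩
  choose q0 hq0 using Fconv
  have hadd : ∀ y z : E, q0 (y + z) = q0 y + q0 z := by
    intro y z
    refine tendsto_nhds_unique (hq0 (y + z)) ?_
    refine ((hq0 y).add (hq0 z)).congr fun h => ?_
    simp only [hFdef, map_add]
    ring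
  have hsmul : ∀ (c : ℝ) (y : E), q0 (c • y) = c * q0 y := by
    intro c y
    refine tendsto_nhds_unique (hq0 (c • y)) ?_
    refine ((hq0 y).const_mul c).congr fun h => ?_
    simp only [hFdef, ContinuousLinearMap.map_smul, smul_eq_mul]
    ring
  have hbound : ∀ y : E, ‖q0 y‖ ≤ C * ‖y‖ := by
    intro y
    rw [Real.norm_eq_abs]
    exact le_of_tendsto (hq0 y).abs (Fbound y)
  set qlin : E →ₗ[ℝ] ℝ :=
    { toFun := q0, map_add' := hadd, map_smul' := fun c y => by simpa using hsmul c y }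
    with hqlin
  set q : E →L[ℝ] ℝ := qlin.mkContinuous C hbound with hqdef
  have hqapp : ∀ y : E, q y = q0 y := fun y => rfl
  refine ⟨q, fun y => by rw [hqapp]; exact hq0 y, ?_⟩
  rw [hasDerivAt_iff_tendsto_slope]
  have hA : Tendsto (fun s : ℝ => F (x t) (s - t)) (𝓝[≠] t) (𝓝 (q0 (x t))) :=
    (hq0 (x t)).comp htrans'
  have hslopex : Tendsto (slope x t) (𝓝[≠] t) (𝓝 xd) := hasDerivAt_iff_tendsto_slope.1 hx
  have hB : Tendsto (fun s : ℝ => p t (slope x t s)) (𝓝[≠] t) (𝓝 (p t xd)) :=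
    ((p t).continuous.tendsto xd).comp hslopex
  have hCc : Tendsto (fun s : ℝ => (s - t)⁻¹ * ((p s - p t) (x s - x t))) (𝓝[≠] t) (𝓝 0) := by
    have hg0 : Tendsto (fun s : ℝ => ‖p s - p t‖ * ‖slope x t s‖) (𝓝[≠] t) (𝓝 0) := by
      have := pcont.mul hslopex.norm
      simpa using this
    refine squeeze_zero_norm' ?_ hg0
    filter_upwards [hsne] with s hs
    have hst : s - t ≠ 0 := sub_ne_zero.2 hs
    have h1 : ‖(s - t)⁻¹ * ((p s - p t) (x s - x t))‖
        = |s - t|⁻¹ * ‖(p s - p t) (x s - x t)‖ := by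
      rw [Real.norm_eq_abs, abs_mul, abs_inv, Real.norm_eq_abs]
    rw [h1]
    have h2 : ‖(p s - p t) (x s - x t)‖ ≤ ‖p s - p t‖ * ‖x s - x t‖ :=
      ContinuousLinearMap.le_opNorm _ _
    have h3 : ‖slope x t s‖ = |s - t|⁻¹ * ‖x s - x t‖ := by
      rw [slope, norm_smul, norm_inv, Real.norm_eq_abs, vsub_eq_sub]
    calc |s - t|⁻¹ * ‖(p s - p t) (x s - x t)‖
        ≤ |s - t|⁻¹ * (‖p s - p t‖ * ‖x s - x t‖) := by
          apply mul_le_mul_of_nonneg_left h2 (by positivity)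
      _ = ‖p s - p t‖ * ‖slope x t s‖ := by rw [h3]; ring
  have hsum := (hA.add hB).add hCc
  rw [add_zero] at hsum
  have hev : (fun s : ℝ => F (x t) (s - t) + p t (slope x t s)
      + (s - t)⁻¹ * ((p s - p t) (x s - x t)))
      =ᶠ[𝓝[≠] t] slope (fun s : ℝ => p s (x s)) t := by
    filter_upwards [hsne] with s hs
    have hst : s - t ≠ 0 := sub_ne_zero.2 hs
    rw [slope_def_field, hFdef]
    simp only [add_sub_cancel, slope, vsub_eq_sub, ContinuousLinearMap.map_smul,
      smul_eq_mul, ContinuousLinearMap.map_sub, ContinuousLinearMap.sub_apply]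
    field_simp
    ring
  have hfinal := hsum.congr' hev
  have hq0eq : q (x t) = q0 (x t) := hqapp _
  rw [hq0eq]
  exact hfinal


/-- Lemma 3 (product rule): for a locally absolutely continuous `p : ℝ₊ → E*` and
an arc `x ∈ W^{1,1}_loc(ℝ₊,E)`, one has
`(d/dt)⟨p(t),x(t)⟩ = ⟨ṗ(t),x(t)⟩ + ⟨p(t),ẋ(t)⟩` a.e., where `ṗ` is the weak*
derivative of `p` (existing a.e.). -/
theorem duality_product_rule
    [CompleteSpace E] [TopologicalSpace.SeparableSpace E]
    (p : ℝ → E →L[ℝ] ℝ) (hp : LocAbsCont p) (a : Arc E) :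
    ∀ᵐ t ∂(volume.restrict (Ici (0:ℝ))), ∃ q : E →L[ℝ] ℝ,
      HasWeakStarDerivAt p q t ∧
      HasDerivAt (fun s : ℝ => p s (a.x s)) (q (a.x t) + p t (a.dx t)) t := by
  obtain ⟨D, Dcount, Ddense⟩ := TopologicalSpace.exists_countable_dense E
  have hphi : ∀ᵐ t : ℝ, ∀ d ∈ D, DifferentiableAt ℝ (fun s : ℝ => p (max s 0) d) t :=
    (ae_ball_iff Dcount).2 fun d _ => phi_ae p hp d
  have hv : ∀ᵐ t : ℝ, DifferentiableAt ℝ (vFun p) t := (vFun_mono hp).ae_differentiableAt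
  have hrestr : volume.restrict (Ici (0:ℝ)) = volume.restrict (Ioi 0) :=
    (Measure.restrict_congr_set Ioi_ae_eq_Ici).symm
  rw [hrestr]
  filter_upwards [ae_restrict_mem measurableSet_Ioi, a.deriv_ae,
    ae_restrict_of_ae hphi, ae_restrict_of_ae hv] with t ht hx hphi' hv'
  exact pointwise_good p hp Ddense ht hx hv' hphi'
end
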